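/- arXiv:2512.06436 — 6 statements merged into one kernel-verified Lean document; each statement's English description precedes it below -/
import Mathlib

section
/- Let A be a finite-dimensional Gorenstein local ℂ-algebra with maximal ideal m of nilpotency index r and socle generator s. Let ξ be a derivation of A with ξ(s) = 0. Then m^{r-1}·ξ(m) = 0 for every m ∈ m. -/
/-- If `ξ` is a derivation of a finite-dimensional Gorenstein local ℂ-algebra
killing a socle generator `s`, then `m^(r-1) · ξ(m) = 0` for all `m` in the
maximal ideal, where `r` is the nilpotency index. -/
theorem derivation_kills_top_power
    (A : Type) [CommRing A] [Algebra ℂ A] [FiniteDimensional ℂ A] [IsLocalRing A]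
    (r : ℕ) (hr : IsLocalRing.maximalIdeal A ^ r ≠ ⊥)
    (hr' : IsLocalRing.maximalIdeal A ^ (r + 1) = ⊥)
    (s : A) (hs : s ≠ 0)
    (hsoc : ∀ a : A,
      (a ∈ IsLocalRing.maximalIdeal A ∧ ∀ x ∈ IsLocalRing.maximalIdeal A, a * x = 0) ↔
        a ∈ Submodule.span ℂ {s})
    (ξ : Derivation ℂ A A) (hξ : ξ s = 0) :
    ∀ m ∈ IsLocalRing.maximalIdeal A, m ^ (r - 1) * ξ m = 0 := by
  intro m hm
  cases r with
  | zero =>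
      have hm0 : m = 0 := by
        have : IsLocalRing.maximalIdeal A = ⊥ := by simpa using hr'
        simpa [this] using hm
      simp [hm0]
  | succ r =>
      -- m^(r+1) is in the socle
      have hmem : m ^ (r + 1) ∈ Submodule.span ℂ {s} := by
        rw [← hsoc]
        constructor
        · exact Ideal.pow_mem_of_mem _ hm _ (Nat.succ_pos r)
        · intro x hx
          have : m ^ (r + 1) * x ∈ IsLocalRing.maximalIdeal A ^ (r + 1 + 1) := by
            rw [pow_succ]
            exact Ideal.mul_mem_mul (Ideal.pow_mem_pow hm _) hx
          rw [hr'] at this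
          simpa using this
      obtain ⟨c, hc⟩ := Submodule.mem_span_singleton.mp hmem
      have hder : ξ (m ^ (r + 1)) = 0 := by
        rw [← hc, ξ.map_smul, hξ, smul_zero]
      rw [Derivation.leibniz_pow] at hder
      have hder' : ((r + 1 : ℕ) : ℂ) • (m ^ r * ξ m) = 0 := by
        rw [Nat.cast_smul_eq_nsmul]
        simpa [smul_eq_mul] using hder
      have hc0 : ((r + 1 : ℕ) : ℂ) ≠ 0 := by exact_mod_cast Nat.succ_ne_zero r
      have := (smul_eq_zero.mp hder').resolve_left hc0
      simpa using this
end

section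
/- Let A be a finite-dimensional Gorenstein local ℂ-algebra with maximal ideal m of nilpotency index r, socle generator s, and index polynomial P_A on V = m/m². Let ξ be a derivation of A acting trivially on Soc(A), and let ρ(ξ) denote the induced linear map on V. Then for every v ∈ V, the directional derivative of P_A at v in the direction ρ(ξ)v vanishes: dP_A(v)(ρ(ξ)v) = 0. -/
/-- Inductive step for: a derivation over ℂ maps nilpotents to nilpotents. -/
lemma deriv_aux {A : Type} [CommRing A] [Algebra ℂ A]
    (D : Derivation ℂ A A) (x : A) (n : ℕ) (hn : x ^ n = 0) :
    ∀ i ≤ n, x ^ (n - i) * (D x) ^ (2 * i) = 0 := by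
  intro i
  induction i with
  | zero => intro _; simpa using hn
  | succ i ih =>
    intro hin
    have hi : i ≤ n := Nat.le_of_succ_le hin
    have IH := ih hi
    have h1 : D (x ^ (n - i) * (D x) ^ (2 * i)) = 0 := by rw [IH]; simp
    rw [Derivation.leibniz, Derivation.leibniz_pow, Derivation.leibniz_pow] at h1
    have h2 : (x ^ (n - i) • ((2 * i) • (D x) ^ (2 * i - 1) • D (D x))
        + (D x) ^ (2 * i) • ((n - i) • x ^ (n - i - 1) • D x)) * D x = 0 := by
      rw [h1, zero_mul]
    have hterm1 : (x ^ (n - i) • ((2 * i) • (D x) ^ (2 * i - 1) • D (D x))) * D x = 0 := by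
      rcases Nat.eq_zero_or_pos i with hi0 | hi0
      · subst hi0; simp
      · have hpow : (D x) ^ (2 * i - 1) * D x = (D x) ^ (2 * i) := by
          rw [← pow_succ]; congr 1; omega
        calc (x ^ (n - i) • ((2 * i) • (D x) ^ (2 * i - 1) • D (D x))) * D x
            = (2 * i) • ((x ^ (n - i) * (D x) ^ (2 * i)) * D (D x)) := by
              simp only [smul_eq_mul, nsmul_eq_mul, ← hpow]; ring
          _ = 0 := by rw [IH]; simp
    have hterm2 : ((n - i : ℕ) : A) * (x ^ (n - (i + 1)) * (D x) ^ (2 * (i + 1))) = 0 := by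
      rw [add_mul, hterm1, zero_add] at h2
      calc ((n - i : ℕ) : A) * (x ^ (n - (i + 1)) * (D x) ^ (2 * (i + 1)))
          = (D x) ^ (2 * i) • ((n - i) • x ^ (n - i - 1) • D x) * D x := by
            simp only [smul_eq_mul, nsmul_eq_mul]
            have h3 : n - (i + 1) = n - i - 1 := by omega
            have h4 : 2 * (i + 1) = 2 * i + 1 + 1 := by omega
            rw [h3, h4]; ring
        _ = 0 := h2
    have hne : ((n - i : ℕ) : ℂ) ≠ 0 := Nat.cast_ne_zero.mpr (by omega)
    have hsm : ((n - i : ℕ) : ℂ) • (x ^ (n - (i + 1)) * (D x) ^ (2 * (i + 1))) = 0 := by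
      rw [Algebra.smul_def]
      simpa using hterm2
    exact (smul_eq_zero.mp hsm).resolve_left hne

/-- A derivation over ℂ maps nilpotents to nilpotents. -/
lemma deriv_nilpotent {A : Type} [CommRing A] [Algebra ℂ A]
    (D : Derivation ℂ A A) (x : A) (hx : IsNilpotent x) : IsNilpotent (D x) := by
  obtain ⟨n, hn⟩ := hx
  refine ⟨2 * n, ?_⟩
  simpa using deriv_aux D x n hn n le_rfl

/-- Let `A` be a finite-dimensional Gorenstein local ℂ-algebra with index
polynomial `P` and let `ξ` be a derivation acting trivially on the socle. Then
for every `v` in the maximal ideal, the directional derivative of `P` at `v` in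
the direction `ξ v` (representing `ρ(ξ)v` in `V = m/m²`) vanishes: the function
`t ↦ P(v + t·ξ v)` has derivative `0` at `t = 0`. -/
theorem index_polynomial_directional_derivative_vanishes
    (A : Type) [CommRing A] [Algebra ℂ A] [FiniteDimensional ℂ A] [IsLocalRing A]
    (r : ℕ) (hr : IsLocalRing.maximalIdeal A ^ r ≠ ⊥)
    (hr' : IsLocalRing.maximalIdeal A ^ (r + 1) = ⊥)
    (s : A) (hs : s ≠ 0)
    (hsoc : ∀ a : A,
      (a ∈ IsLocalRing.maximalIdeal A ∧ ∀ x ∈ IsLocalRing.maximalIdeal A, a * x = 0) ↔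
        a ∈ Submodule.span ℂ {s})
    (P : A → ℂ) (hP : ∀ m ∈ IsLocalRing.maximalIdeal A, m ^ r = P m • s)
    (ξ : Derivation ℂ A A) (hξ : ξ s = 0) :
    ∀ v ∈ IsLocalRing.maximalIdeal A,
      HasDerivAt (fun t : ℂ => P (v + t • ξ v)) 0 0 := by
  intro v hv
  have hnontriv : Nontrivial A := nontrivial_of_ne s 0 hs
  set w := ξ v with hw_def
  have hvnil : IsNilpotent v := ⟨r + 1, by
    have h := Ideal.pow_mem_pow hv (r + 1)
    rw [hr'] at h
    simpa using h⟩
  have hwnil : IsNilpotent w := deriv_nilpotent ξ v hvnil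
  have hw : w ∈ IsLocalRing.maximalIdeal A := by
    rw [IsLocalRing.mem_maximalIdeal]
    exact hwnil.not_isUnit
  have hmem : ∀ t : ℂ, v + t • w ∈ IsLocalRing.maximalIdeal A := by
    intro t
    refine Ideal.add_mem _ hv ?_
    rw [Algebra.smul_def]
    exact Ideal.mul_mem_left _ _ hw
  -- dual functional with lam s = 1
  have hker : LinearMap.ker (LinearMap.toSpanSingleton ℂ A s) = ⊥ := by
    ext t
    simp [LinearMap.mem_ker, LinearMap.toSpanSingleton_apply, smul_eq_zero, hs]
  obtain ⟨lam, hlam⟩ := (LinearMap.toSpanSingleton ℂ A s).exists_leftInverse_of_injective hker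
  have hlams : lam s = 1 := by
    have h := LinearMap.congr_fun hlam 1
    simpa using h
  -- the coefficients
  set c : ℕ → ℂ := fun k => lam (v ^ k * w ^ (r - k) * (r.choose k : A)) with hc
  have hPeq : ∀ t : ℂ, P (v + t • w)
      = ∑ k ∈ Finset.range (r + 1), t ^ (r - k) * c k := by
    intro t
    have h1 : P (v + t • w) = lam ((v + t • w) ^ r) := by
      rw [hP _ (hmem t), map_smul, hlams, smul_eq_mul, mul_one]
    rw [h1, add_pow, map_sum]
    refine Finset.sum_congr rfl fun k hk => ?_
    have : v ^ k * (t • w) ^ (r - k) * (r.choose k : A)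
        = t ^ (r - k) • (v ^ k * w ^ (r - k) * (r.choose k : A)) := by
      rw [smul_pow]
      simp [mul_smul_comm, smul_mul_assoc]
    rw [this, map_smul, smul_eq_mul]
  -- the derivative of the polynomial expression
  have hD : HasDerivAt (fun t : ℂ => ∑ k ∈ Finset.range (r + 1), t ^ (r - k) * c k)
      (∑ k ∈ Finset.range (r + 1), (((r - k : ℕ) : ℂ) * (0 : ℂ) ^ (r - k - 1)) * c k) 0 := by
    refine HasDerivAt.fun_sum fun k _ => ?_
    exact (hasDerivAt_pow (r - k) 0).mul_const (c k)
  -- the derivative value is zero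
  have hzero : (∑ k ∈ Finset.range (r + 1), (((r - k : ℕ) : ℂ) * (0 : ℂ) ^ (r - k - 1)) * c k)
      = 0 := by
    rcases Nat.eq_zero_or_pos r with hr0 | hrpos
    · subst hr0; simp
    · have key : ∀ k ∈ Finset.range (r + 1), k ≠ r - 1 →
          (((r - k : ℕ) : ℂ) * (0 : ℂ) ^ (r - k - 1)) * c k = 0 := by
        intro k hk hkne
        rcases Nat.lt_or_ge k r with hkr | hkr
        · have : r - k - 1 ≠ 0 := by omega
          rw [zero_pow this, mul_zero, zero_mul]
        · have : r - k = 0 := by omega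
          rw [this]; simp
      rw [Finset.sum_eq_single_of_mem (r - 1) (Finset.mem_range.mpr (by omega)) key]
      have h1 : r - (r - 1) = 1 := by omega
      have h2 : r - (r - 1) - 1 = 0 := by omega
      rw [h1]
      norm_num
      -- c (r-1) = lam (ξ (v ^ r)) = 0
      have hchoose : (r.choose (r - 1) : A) = (r : A) := by
        have h5 : r.choose (r - 1) = r := by
          have h6 := Nat.choose_symm (show 1 ≤ r by omega)
          rw [h6, Nat.choose_one_right]
        rw [h5]
      have hle : v ^ (r - 1) * w ^ (r - (r - 1)) * (r.choose (r - 1) : A) = ξ (v ^ r) := by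
        rw [Derivation.leibniz_pow, h1, hchoose, pow_one]
        simp only [smul_eq_mul, nsmul_eq_mul]
        ring
      have hxivr : ξ (v ^ r) = 0 := by
        rw [hP v hv, ξ.map_smul, hξ, smul_zero]
      rw [hc]
      simp only
      rw [hle, hxivr, map_zero]
  have hfun : (fun t : ℂ => P (v + t • w))
      = fun t : ℂ => ∑ k ∈ Finset.range (r + 1), t ^ (r - k) * c k := funext hPeq
  rw [hzero] at hD
  rw [hfun]
  exact hD
end

section
/- Let A be a finite-dimensional Gorenstein local ℂ-algebra with index polynomial P_A (homogeneous of degree r) on V = m/m². Let ξ be a derivation of A killing the socle, and let v ∈ V be an eigenvector of the induced map ρ(ξ) on V with eigenvalue λ. If P_A(v) ≠ 0, then λ = 0. -/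
/-- Let `A` be a finite-dimensional Gorenstein local ℂ-algebra with index
polynomial `P` (homogeneous of degree `r`), `ξ` a derivation killing the socle,
and `v` an eigenvector (mod `m²`) of the induced map on `V = m/m²` with
eigenvalue `λ`. If `P(v) ≠ 0` then `λ = 0`. -/
theorem eigenvalue_zero_of_index_polynomial_ne_zero
    (A : Type) [CommRing A] [Algebra ℂ A] [FiniteDimensional ℂ A] [IsLocalRing A]
    (r : ℕ) (hr : IsLocalRing.maximalIdeal A ^ r ≠ ⊥)
    (hr' : IsLocalRing.maximalIdeal A ^ (r + 1) = ⊥)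
    (s : A) (hs : s ≠ 0)
    (hsoc : ∀ a : A,
      (a ∈ IsLocalRing.maximalIdeal A ∧ ∀ x ∈ IsLocalRing.maximalIdeal A, a * x = 0) ↔
        a ∈ Submodule.span ℂ {s})
    (P : A → ℂ) (hP : ∀ m ∈ IsLocalRing.maximalIdeal A, m ^ r = P m • s)
    (hhom : ∀ (lam : ℂ), ∀ m ∈ IsLocalRing.maximalIdeal A, P (lam • m) = lam ^ r * P m)
    (ξ : Derivation ℂ A A) (hξ : ξ s = 0)
    (lam : ℂ) (v : A) (hv : v ∈ IsLocalRing.maximalIdeal A)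
    (hv0 : v ∉ IsLocalRing.maximalIdeal A ^ 2)
    (heig : ξ v - lam • v ∈ IsLocalRing.maximalIdeal A ^ 2)
    (hPv : P v ≠ 0) :
    lam = 0 := by
  -- r ≥ 1
  have hr1 : 1 ≤ r := by
    by_contra h
    have hr0 : r = 0 := by omega
    subst hr0
    rw [pow_one] at hr'
    have : v = 0 := by simpa [hr'] using hv
    exact hv0 (by simp [this])
  -- v^(r-1) * (ξ v - lam • v) = 0
  have hw : v ^ (r - 1) * (ξ v - lam • v) = 0 := by
    have hmem : v ^ (r - 1) * (ξ v - lam • v) ∈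
        IsLocalRing.maximalIdeal A ^ (r - 1) * IsLocalRing.maximalIdeal A ^ 2 :=
      Submodule.mul_mem_mul (Ideal.pow_mem_pow hv _) heig
    rw [← pow_add] at hmem
    have : r - 1 + 2 = r + 1 := by omega
    rw [this, hr'] at hmem
    simpa using hmem
  -- apply ξ to v^r = P v • s
  have hxir : ξ (v ^ r) = 0 := by
    rw [hP v hv, Derivation.map_smul, hξ, smul_zero]
  have hleib : (r : ℕ) • (v ^ (r - 1) • ξ v) = 0 := by
    rw [← Derivation.leibniz_pow, hxir]
  have key : (r : ℂ) • (lam • v ^ r) = 0 := by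
    have h1 : v ^ (r - 1) • ξ v = lam • v ^ r := by
      have : ξ v = lam • v + (ξ v - lam • v) := by ring
      rw [smul_eq_mul, this, mul_add, hw, add_zero, mul_smul_comm, ← pow_succ]
      congr 2
      omega
    rw [h1] at hleib
    rw [← Nat.cast_smul_eq_nsmul ℂ] at hleib
    exact hleib
  rw [hP v hv, smul_smul, smul_smul, smul_eq_zero] at key
  rcases key with h | h
  · have hrne : (r : ℂ) ≠ 0 := Nat.cast_ne_zero.mpr (by omega)
    rcases mul_eq_zero.mp h with h2 | h2
    · rcases mul_eq_zero.mp h2 with h3 | h3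
      · exact absurd h3 hrne
      · exact h3
    · exact absurd h2 hPv
  · exact absurd h hs
end

section
/- Let A be a finite-dimensional Gorenstein local ℂ-algebra of full null-index with maximal ideal m of nilpotency index r. Let k be a Lie subalgebra of Der(A) acting trivially on Soc(A). Then for every ξ ∈ k, the induced linear transformation ρ(ξ) on V = m/m² is nilpotent. -/
open IsLocalRing Polynomial

lemma deriv_mem_maximalIdeal_aux
    (A : Type) [CommRing A] [Algebra ℂ A] [IsLocalRing A]
    (ξ : Derivation ℂ A A) {x : A} (hnil : ∃ n : ℕ, x ^ n = 0) :
    ξ x ∈ maximalIdeal A := by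
  classical
  by_contra h
  have hu : IsUnit (ξ x) := by
    rwa [IsLocalRing.mem_maximalIdeal, mem_nonunits_iff, not_not] at h
  set n := Nat.find hnil with hn
  have hspec : x ^ n = 0 := Nat.find_spec hnil
  have hn1 : 1 ≤ n := by
    rcases Nat.eq_zero_or_pos n with h0 | h0
    · rw [h0, pow_zero] at hspec; exact absurd hspec one_ne_zero
    · exact h0
  have hmin : ¬ x ^ (n - 1) = 0 := Nat.find_min hnil (by omega)
  have hlp : ξ (x ^ n) = n • x ^ (n - 1) • ξ x := Derivation.leibniz_pow (D := ξ) (a := x) n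
  rw [hspec, map_zero] at hlp
  have hnun : IsUnit ((n : A)) := by
    have : ((n : A)) = algebraMap ℂ A (n : ℂ) := by simp
    rw [this]
    exact (isUnit_iff_ne_zero.mpr (by exact_mod_cast (by omega : n ≠ 0))).map (algebraMap ℂ A)
  have h0 : (n : A) * (ξ x * x ^ (n - 1)) = 0 := by
    rw [← hlp.symm, nsmul_eq_mul, smul_eq_mul]; ring
  rw [hnun.mul_right_eq_zero, hu.mul_right_eq_zero] at h0
  exact hmin h0

set_option maxHeartbeats 1000000 in
/-- Let `A` be a finite-dimensional Gorenstein local ℂ-algebra of full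
null-index and `k` a Lie subalgebra of `Der(A)` acting trivially on the socle.
Then for every `ξ ∈ k` the induced linear map `ρ(ξ)` on `V = m/m²` is
nilpotent: some iterate of `ξ` maps the maximal ideal into `m²`. -/
theorem induced_map_nilpotent_of_full_null_index
    (A : Type) [CommRing A] [Algebra ℂ A] [FiniteDimensional ℂ A] [IsLocalRing A]
    (r : ℕ) (hr : IsLocalRing.maximalIdeal A ^ r ≠ ⊥)
    (hr' : IsLocalRing.maximalIdeal A ^ (r + 1) = ⊥)
    (s : A) (hs : s ≠ 0)
    (hsoc : ∀ a : A,
      (a ∈ IsLocalRing.maximalIdeal A ∧ ∀ x ∈ IsLocalRing.maximalIdeal A, a * x = 0) ↔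
        a ∈ Submodule.span ℂ {s})
    (P : A → ℂ) (hP : ∀ m ∈ IsLocalRing.maximalIdeal A, m ^ r = P m • s)
    -- `A` is of full null-index:
    (hfni : ∀ ξ : Derivation ℂ A A, ξ ≠ 0 → ∀ lam : ℂ,
      (∃ v, v ∈ IsLocalRing.maximalIdeal A ∧ v ∉ IsLocalRing.maximalIdeal A ^ 2 ∧
        ξ v - lam • v ∈ IsLocalRing.maximalIdeal A ^ 2) →
      ∃ v, v ∈ IsLocalRing.maximalIdeal A ∧ v ∉ IsLocalRing.maximalIdeal A ^ 2 ∧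
        ξ v - lam • v ∈ IsLocalRing.maximalIdeal A ^ 2 ∧ P v ≠ 0)
    (k : LieSubalgebra ℂ (Derivation ℂ A A))
    (hk : ∀ ξ ∈ k, ξ s = 0) :
    ∀ ξ ∈ k, ∃ n : ℕ,
      ∀ v ∈ IsLocalRing.maximalIdeal A, (⇑ξ)^[n] v ∈ IsLocalRing.maximalIdeal A ^ 2 := by
  intro ξ hξk
  set I := IsLocalRing.maximalIdeal A with hI
  -- trivial cases
  by_cases hξ0 : ξ = 0
  · exact ⟨1, fun v hv => by simp [hξ0, Submodule.zero_mem]⟩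
  rcases Nat.eq_zero_or_pos r with hr0 | hr1
  · refine ⟨0, fun v hv => ?_⟩
    have : I = ⊥ := by rw [hr0, zero_add, pow_one] at hr'; exact hr'
    have : v = 0 := by rw [this] at hv; simpa using hv
    simp [this, Submodule.zero_mem]
  -- elements of `I` are nilpotent
  have hnil : ∀ x ∈ I, x ^ (r + 1) = 0 := by
    intro x hx
    have := Ideal.pow_mem_pow hx (r + 1)
    rw [hr'] at this
    simpa using this
  -- the derivation preserves I and I^2
  have hmem : ∀ x ∈ I, ξ x ∈ I := fun x hx =>
    deriv_mem_maximalIdeal_aux A ξ ⟨r + 1, hnil x hx⟩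
  have hmem2 : ∀ x ∈ (I ^ 2 : Ideal A), ξ x ∈ (I ^ 2 : Ideal A) := by
    intro x hx
    rw [pow_two] at hx ⊢
    induction hx using Submodule.mul_induction_on' with
    | mem_mul_mem a ha b hb =>
      rw [Derivation.leibniz]
      exact Submodule.add_mem _
        (Ideal.mul_mem_mul ha (hmem b hb))
        (Ideal.mul_mem_mul hb (hmem a ha))
    | add x hx y hy ihx ihy =>
      rw [map_add]; exact Submodule.add_mem _ ihx ihy
  -- set up the quotient V = I / I^2 as a ℂ-module
  set M : Submodule ℂ A := Submodule.restrictScalars ℂ I with hM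
  set N : Submodule ℂ M := (Submodule.restrictScalars ℂ (I ^ 2)).comap M.subtype with hN
  have hmemM : ∀ x ∈ M, (ξ.toLinearMap : A →ₗ[ℂ] A) x ∈ M := fun x hx => hmem x hx
  set ξ' : M →ₗ[ℂ] M := LinearMap.restrict (ξ.toLinearMap : A →ₗ[ℂ] A) hmemM with hξ'
  have hξ'coe : ∀ x : M, (ξ' x : A) = ξ (x : A) := fun x => rfl
  have hcomp : N ≤ N.comap ξ' := by
    intro x hx
    simp only [hN, Submodule.mem_comap, Submodule.coe_subtype,
      Submodule.restrictScalars_mem] at hx ⊢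
    rw [hξ'coe]
    exact hmem2 _ hx
  set f : (M ⧸ N) →ₗ[ℂ] (M ⧸ N) := Submodule.mapQ N N ξ' hcomp with hf
  have hfmk : ∀ x : M, f (Submodule.Quotient.mk x) = Submodule.Quotient.mk (ξ' x) :=
    fun x => Submodule.mapQ_apply (τ₁₂ := RingHom.id ℂ) N N ξ' x
  -- iterates
  have key : ∀ (n : ℕ) (x : M),
      (f ^ n) (Submodule.Quotient.mk x) = Submodule.Quotient.mk ((ξ' ^ n) x) := by
    intro n
    induction n with
    | zero => intro x; simp
    | succ n ih =>
      intro x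
      rw [pow_succ', pow_succ', Module.End.mul_apply, Module.End.mul_apply, ih, hfmk]
  have key2 : ∀ (n : ℕ) (x : M), ((ξ' ^ n) x : A) = (⇑ξ)^[n] (x : A) := by
    intro n
    induction n with
    | zero => intro x; simp
    | succ n ih =>
      intro x
      rw [pow_succ', Module.End.mul_apply, Function.iterate_succ_apply', hξ'coe, ih]
  -- every eigenvalue of f is zero
  have heig : ∀ lam : ℂ, Module.End.HasEigenvalue f lam → lam = 0 := by
    intro lam hl
    obtain ⟨w, hw⟩ := hl.exists_hasEigenvector
    obtain ⟨x, rfl⟩ := Submodule.Quotient.mk_surjective N w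
    have hx2 : (x : A) ∉ (I ^ 2 : Ideal A) := by
      intro hc
      exact hw.2 ((Submodule.Quotient.mk_eq_zero N).mpr (by
        simpa [hN, Submodule.mem_comap] using hc))
    have hxeig : ξ (x : A) - lam • (x : A) ∈ (I ^ 2 : Ideal A) := by
      have := hw.apply_eq_smul
      rw [hfmk] at this
      have h2 : Submodule.Quotient.mk (p := N) (ξ' x - lam • x) = 0 := by
        rw [Submodule.Quotient.mk_sub, this, Submodule.Quotient.mk_smul, sub_self]
      have h3 : ξ' x - lam • x ∈ N := (Submodule.Quotient.mk_eq_zero N).mp h2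
      simpa [hN, Submodule.mem_comap, hξ'coe] using h3
    obtain ⟨v, hv, hv2, hvw, hPv⟩ := hfni ξ hξ0 lam ⟨x, x.2, hx2, hxeig⟩
    -- now deduce lam = 0
    set w := ξ v - lam • v with hwdef
    have hξv : ξ v = lam • v + w := by rw [hwdef]; ring
    have h1 : ξ (v ^ r) = 0 := by
      rw [hP v hv, Derivation.map_smul, hk ξ hξk, smul_zero]
    have h2 : ξ (v ^ r) = r • v ^ (r - 1) • ξ v :=
      Derivation.leibniz_pow (D := ξ) (a := v) r
    have hzero : v ^ (r - 1) * w = 0 := by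
      have hmul : v ^ (r - 1) * w ∈ I ^ (r - 1) * I ^ 2 :=
        Ideal.mul_mem_mul (Ideal.pow_mem_pow hv _) hvw
      have heq : (I : Ideal A) ^ (r - 1) * I ^ 2 = I ^ (r + 1) := by
        rw [← pow_add]; congr 1; omega
      rw [heq, hr'] at hmul
      simpa using hmul
    have hvv : v ^ (r - 1) * v = v ^ r := by
      rw [← pow_succ]; congr 1; omega
    have h3 : (0 : A) = ((r : ℂ) * (lam * P v)) • s := by
      have : v ^ (r - 1) • ξ v = lam • (P v • s) := by
        rw [hξv, smul_add, smul_eq_mul, smul_eq_mul, hzero, add_zero, mul_smul_comm,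
          hvv, hP v hv]
      rw [← h1, h2, this, ← Nat.cast_smul_eq_nsmul ℂ, smul_smul, smul_smul, mul_assoc]
    have h4 : ((r : ℂ) * (lam * P v)) = 0 := by
      rcases smul_eq_zero.mp h3.symm with h | h
      · exact h
      · exact absurd h hs
    have hrne : (r : ℂ) ≠ 0 := Nat.cast_ne_zero.mpr (by omega)
    rcases mul_eq_zero.mp h4 with h | h
    · exact absurd h hrne
    rcases mul_eq_zero.mp h with h | h
    · exact h
    · exact absurd h hPv
  -- finiteness
  have hfin : FiniteDimensional ℂ (M ⧸ N) := inferInstance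
  -- f is nilpotent
  have hint : IsIntegral ℂ f := Algebra.IsIntegral.isIntegral f
  set p := minpoly ℂ f with hp
  have hmo : p.Monic := minpoly.monic hint
  have hsp : p.Splits := IsAlgClosed.splits p
  have hroots : ∀ a ∈ p.roots, a = 0 := by
    intro a ha
    have hroot : p.IsRoot a := isRoot_of_mem_roots ha
    exact heig a (Module.End.hasEigenvalue_iff_isRoot.mpr hroot)
  have hpeq : p = X ^ p.roots.card := by
    conv_lhs => rw [hsp.eq_prod_roots_of_monic hmo]
    rw [Multiset.map_congr rfl (fun a ha => by rw [hroots a ha, map_zero, sub_zero] :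
      ∀ a ∈ p.roots, X - C a = X)]
    rw [Multiset.map_const', Multiset.prod_replicate]
  have hfn : f ^ p.roots.card = 0 := by
    have := minpoly.aeval ℂ f
    rw [← hp, hpeq] at this
    simpa using this
  refine ⟨p.roots.card, fun v hv => ?_⟩
  have h5 : (f ^ p.roots.card) (Submodule.Quotient.mk (⟨v, hv⟩ : M)) = 0 := by
    rw [hfn]; rfl
  rw [key] at h5
  have h6 : (ξ' ^ p.roots.card) (⟨v, hv⟩ : M) ∈ N := (Submodule.Quotient.mk_eq_zero N).mp h5
  have h7 : ((ξ' ^ p.roots.card) (⟨v, hv⟩ : M) : A) ∈ (I ^ 2 : Ideal A) := by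
    simpa [hN, Submodule.mem_comap] using h6
  rwa [key2] at h7
end

section
/- Let A be a finite-dimensional local ℂ-algebra with maximal ideal m of nilpotency index r. Let D be the Lie subalgebra of Der(A) consisting of derivations ξ with ξ(m) ⊆ m². Then D is a solvable Lie algebra; more precisely, the i-th derived subalgebra D^(i) maps m into m^{i+2}, so D^(r-1) = 0. -/
private lemma deriv_pow_mem {A : Type} [CommRing A] [Algebra ℂ A]
    (M : Ideal A) (ξ : Derivation ℂ A A) (s : ℕ)
    (hξ : ∀ m ∈ M, ξ m ∈ M ^ s) :
    ∀ k, ∀ x ∈ M ^ (k + 1), ξ x ∈ M ^ (k + s) := by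
  intro k
  induction k with
  | zero => intro x hx; simpa using hξ x (by simpa using hx)
  | succ k ih =>
    intro x hx
    rw [pow_succ] at hx
    refine Submodule.mul_induction_on hx ?_ ?_
    · intro a ha b hb
      have h : ξ (a * b) = a * ξ b + ξ a * b := by
        rw [Derivation.leibniz]; simp [smul_eq_mul]; ring
      rw [h]
      refine add_mem ?_ ?_
      · have h1 : M ^ (k + 1 + s) = M ^ (k + 1) * M ^ s := by rw [← pow_add]
        rw [h1]; exact Ideal.mul_mem_mul ha (hξ b hb)
      · have h1 : k + 1 + s = (k + s) + 1 := by omega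
        rw [h1, pow_succ]
        exact Ideal.mul_mem_mul (ih a ha) hb
    · intro y z hy hz; rw [map_add]; exact add_mem hy hz

private def kerIdeal (A : Type) [CommRing A] [Algebra ℂ A] [IsLocalRing A]
    (D : LieSubalgebra ℂ (Derivation ℂ A A))
    (hD : ∀ ξ : Derivation ℂ A A, ξ ∈ D ↔
      ∀ m ∈ IsLocalRing.maximalIdeal A, ξ m ∈ IsLocalRing.maximalIdeal A ^ 2)
    (i : ℕ) : LieIdeal ℂ D where
  carrier := {ξ : D | ∀ m ∈ IsLocalRing.maximalIdeal A,
    (ξ : Derivation ℂ A A) m ∈ IsLocalRing.maximalIdeal A ^ (i + 2)}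
  add_mem' := by
    intro a b ha hb m hm
    have h : ((a + b : D) : Derivation ℂ A A) = (a : Derivation ℂ A A) + b := rfl
    rw [h, Derivation.add_apply]
    exact add_mem (ha m hm) (hb m hm)
  zero_mem' := by
    intro m hm
    have h : ((0 : D) : Derivation ℂ A A) = 0 := rfl
    rw [h]; simp
  smul_mem' := by
    intro c a ha m hm
    have h : ((c • a : D) : Derivation ℂ A A) = c • (a : Derivation ℂ A A) := rfl
    rw [h, Derivation.smul_apply]
    rw [← algebraMap_smul A c ((a : Derivation ℂ A A) m)]
    exact Submodule.smul_mem _ _ (ha m hm)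
  lie_mem := by
    intro x ξ hξ m hm
    have hx : ∀ m ∈ IsLocalRing.maximalIdeal A,
        (x : Derivation ℂ A A) m ∈ IsLocalRing.maximalIdeal A ^ 2 := (hD _).mp x.2
    have hcoe : ((⁅x, ξ⁆ : D) : Derivation ℂ A A)
        = ⁅(x : Derivation ℂ A A), (ξ : Derivation ℂ A A)⁆ := rfl
    rw [hcoe, Derivation.commutator_apply]
    refine sub_mem ?_ ?_
    · -- x (ξ m) : ξ m ∈ M^(i+2), x maps M^(i+2) into M^(i+3) ⊆ M^(i+2)
      have := deriv_pow_mem (IsLocalRing.maximalIdeal A) (x : Derivation ℂ A A) 2 hx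
        (i + 1) ((ξ : Derivation ℂ A A) m) (hξ m hm)
      exact Ideal.pow_le_pow_right (by omega) this
    · -- ξ (x m) : x m ∈ M^2 ⊆ M
      have hxm : (x : Derivation ℂ A A) m ∈ IsLocalRing.maximalIdeal A := by
        have h2 := Ideal.pow_le_pow_right (one_le_two) (hx m hm)
        rwa [pow_one] at h2
      exact hξ _ hxm

private lemma mem_kerIdeal_iff {A : Type} [CommRing A] [Algebra ℂ A] [IsLocalRing A]
    (D : LieSubalgebra ℂ (Derivation ℂ A A))
    (hD : ∀ ξ : Derivation ℂ A A, ξ ∈ D ↔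
      ∀ m ∈ IsLocalRing.maximalIdeal A, ξ m ∈ IsLocalRing.maximalIdeal A ^ 2)
    (i : ℕ) (ξ : D) : ξ ∈ kerIdeal A D hD i ↔
      ∀ m ∈ IsLocalRing.maximalIdeal A,
        (ξ : Derivation ℂ A A) m ∈ IsLocalRing.maximalIdeal A ^ (i + 2) :=
  Iff.rfl

/-- Let `A` be a finite-dimensional local ℂ-algebra with `m^(r+1) = 0`, and let
`D` be the Lie subalgebra of `Der(A)` of derivations mapping `m` into `m²`.
Then the `i`-th derived subalgebra of `D` maps `m` into `m^(i+2)`; in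
particular `D` is solvable. -/
theorem kernel_subalgebra_solvable
    (A : Type) [CommRing A] [Algebra ℂ A] [FiniteDimensional ℂ A] [IsLocalRing A]
    (r : ℕ) (hr : IsLocalRing.maximalIdeal A ^ r ≠ ⊥)
    (hr' : IsLocalRing.maximalIdeal A ^ (r + 1) = ⊥)
    (D : LieSubalgebra ℂ (Derivation ℂ A A))
    (hD : ∀ ξ : Derivation ℂ A A, ξ ∈ D ↔
      ∀ m ∈ IsLocalRing.maximalIdeal A, ξ m ∈ IsLocalRing.maximalIdeal A ^ 2) :
    (∀ (i : ℕ) (ξ : D), ξ ∈ LieAlgebra.derivedSeries ℂ D i →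
      ∀ m ∈ IsLocalRing.maximalIdeal A,
        (ξ : Derivation ℂ A A) m ∈ IsLocalRing.maximalIdeal A ^ (i + 2)) ∧
    LieAlgebra.derivedSeries ℂ D (r - 1) = ⊥ ∧
    LieAlgebra.IsSolvable D := by
  have key : ∀ i, LieAlgebra.derivedSeries ℂ D i ≤ kerIdeal A D hD i := by
    intro i
    induction i with
    | zero =>
      intro ξ _
      exact (mem_kerIdeal_iff D hD 0 ξ).mpr ((hD _).mp ξ.2)
    | succ i ih =>
      have hsucc : LieAlgebra.derivedSeries ℂ D (i + 1) =
          ⁅LieAlgebra.derivedSeries ℂ D i, LieAlgebra.derivedSeries ℂ D i⁆ := by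
        rw [LieAlgebra.derivedSeries_def, LieAlgebra.derivedSeries_def,
          LieAlgebra.derivedSeriesOfIdeal_succ]
      rw [hsucc, LieSubmodule.lieIdeal_oper_eq_span]
      apply LieSubmodule.lieSpan_le.mpr
      rintro ξ ⟨x, y, rfl⟩
      refine (mem_kerIdeal_iff D hD (i + 1) _).mpr ?_
      intro m hm
      have hxK := (mem_kerIdeal_iff D hD i _).mp (ih x.2)
      have hyK := (mem_kerIdeal_iff D hD i _).mp (ih y.2)
      have hx2 : ∀ m ∈ IsLocalRing.maximalIdeal A,
          ((x : D) : Derivation ℂ A A) m ∈ IsLocalRing.maximalIdeal A ^ 2 :=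
        (hD _).mp (x : D).2
      have hy2 : ∀ m ∈ IsLocalRing.maximalIdeal A,
          ((y : D) : Derivation ℂ A A) m ∈ IsLocalRing.maximalIdeal A ^ 2 :=
        (hD _).mp (y : D).2
      have hcoe : ((⁅(x : D), (y : D)⁆ : D) : Derivation ℂ A A)
          = ⁅((x : D) : Derivation ℂ A A), ((y : D) : Derivation ℂ A A)⁆ := rfl
      rw [hcoe, Derivation.commutator_apply]
      refine sub_mem ?_ ?_
      · have h1 := deriv_pow_mem (IsLocalRing.maximalIdeal A) _ 2 hx2 (i + 1)
          (((y : D) : Derivation ℂ A A) m) (hyK m hm)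
        exact (by omega : i + 1 + 2 = i + 3) ▸ h1
      · have h1 := deriv_pow_mem (IsLocalRing.maximalIdeal A) _ 2 hy2 (i + 1)
          (((x : D) : Derivation ℂ A A) m) (hxK m hm)
        exact (by omega : i + 1 + 2 = i + 3) ▸ h1
  have part1 : ∀ (i : ℕ) (ξ : D), ξ ∈ LieAlgebra.derivedSeries ℂ D i →
      ∀ m ∈ IsLocalRing.maximalIdeal A,
        (ξ : Derivation ℂ A A) m ∈ IsLocalRing.maximalIdeal A ^ (i + 2) :=
    fun i ξ h => (mem_kerIdeal_iff D hD i ξ).mp (key i h)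
  -- residue field is ℂ
  haveI : Module.Finite ℂ (IsLocalRing.ResidueField A) := by
    refine Module.Finite.of_surjective
      (M := A) (P := IsLocalRing.ResidueField A) (σ := RingHom.id ℂ)
      { toFun := IsLocalRing.residue A
        map_add' := fun x y => map_add _ x y
        map_smul' := fun c x => by
          have h1 : c • x = algebraMap ℂ A c * x := Algebra.smul_def c x
          have h2 : IsLocalRing.residue A (algebraMap ℂ A c)
              = algebraMap ℂ (IsLocalRing.ResidueField A) c := rfl
          simp only [RingHom.id_apply]
          rw [h1, map_mul, h2, ← Algebra.smul_def] }
      Ideal.Quotient.mk_surjective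
  haveI : Algebra.IsIntegral ℂ (IsLocalRing.ResidueField A) :=
    Algebra.IsIntegral.of_finite ℂ _
  have hsurj : Function.Surjective (algebraMap ℂ (IsLocalRing.ResidueField A)) :=
    IsAlgClosed.algebraMap_bijective_of_isIntegral.2
  have part2 : LieAlgebra.derivedSeries ℂ D (r - 1) = ⊥ := by
    rw [LieSubmodule.eq_bot_iff]
    intro ξ hξ
    have hm0 : ∀ m ∈ IsLocalRing.maximalIdeal A, (ξ : Derivation ℂ A A) m = 0 := by
      intro m hm
      have h1 := part1 (r - 1) ξ hξ m hm
      have h2 : (ξ : Derivation ℂ A A) m ∈ IsLocalRing.maximalIdeal A ^ (r + 1) :=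
        Ideal.pow_le_pow_right (by omega) h1
      rw [hr'] at h2
      exact (Submodule.mem_bot A).mp h2
    have hzero : (ξ : Derivation ℂ A A) = 0 := by
      ext a
      obtain ⟨c, hc⟩ := hsurj (IsLocalRing.residue A a)
      have hmem : a - algebraMap ℂ A c ∈ IsLocalRing.maximalIdeal A := by
        have h0 : IsLocalRing.residue A (a - algebraMap ℂ A c) = 0 := by
          have hres : IsLocalRing.residue A (algebraMap ℂ A c)
              = algebraMap ℂ (IsLocalRing.ResidueField A) c := rfl
          rw [map_sub, hres, hc, sub_self]
        exact Ideal.Quotient.eq_zero_iff_mem.mp h0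
      have ha : (ξ : Derivation ℂ A A) a
          = (ξ : Derivation ℂ A A) (a - algebraMap ℂ A c) := by
        rw [map_sub, Derivation.map_algebraMap, sub_zero]
      rw [ha, hm0 _ hmem]
      rfl
    exact Subtype.ext hzero
  exact ⟨part1, part2, LieAlgebra.IsSolvable.mk part2⟩
end

section
/- Let A be a finite-dimensional Gorenstein local ℂ-algebra of full null-index, and let k ⊆ Der(A) be a Lie subalgebra acting trivially on Soc(A). Then k is a solvable Lie algebra. -/
set_option maxHeartbeats 1000000
set_option linter.unusedSectionVars false

open IsLocalRing Polynomial

lemma aux_nilpotent_of_eigenvalues_zero {V : Type*} [AddCommGroup V] [Module ℂ V]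
    [FiniteDimensional ℂ V] (f : Module.End ℂ V)
    (h : ∀ μ : ℂ, f.HasEigenvalue μ → μ = 0) : IsNilpotent f := by
  have hint : IsIntegral ℂ f := Algebra.IsIntegral.isIntegral f
  have hmon : (minpoly ℂ f).Monic := minpoly.monic hint
  have hsplit : (minpoly ℂ f).Splits := IsAlgClosed.splits _
  have hroots : ∀ μ ∈ (minpoly ℂ f).roots, μ = 0 := fun μ hμ =>
    h μ (Module.End.hasEigenvalue_of_isRoot (isRoot_of_mem_roots hμ))
  have hcard : Multiset.card (minpoly ℂ f).roots = (minpoly ℂ f).natDegree := by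
    have := hsplit.natDegree_eq_card_roots
    simpa using this.symm
  have key : minpoly ℂ f = X ^ (minpoly ℂ f).natDegree := by
    conv_lhs => rw [hsplit.eq_prod_roots_of_monic hmon]
    rw [Multiset.map_congr rfl (fun a ha => show X - C a = X by
        rw [hroots a ha, map_zero, sub_zero]),
      Multiset.map_const', Multiset.prod_replicate, hcard]
  exact ⟨(minpoly ℂ f).natDegree, by
    have h0 := minpoly.aeval ℂ f
    rw [key] at h0; simpa using h0⟩



-- derivations send everything into the maximal ideal, when m is nilpotent
lemma aux_deriv_mem (A : Type) [CommRing A] [Algebra ℂ A] [FiniteDimensional ℂ A]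
    [IsLocalRing A] {N : ℕ} (hN : maximalIdeal A ^ N = ⊥)
    (ξ : Derivation ℂ A A) (a : A) : ξ a ∈ maximalIdeal A := by
  -- step 1 : b ∈ m → ξ b ∈ m
  have step1 : ∀ b ∈ maximalIdeal A, ξ b ∈ maximalIdeal A := by
    intro b hb
    by_contra hub
    have hu : IsUnit (ξ b) := by
      by_contra h2
      exact hub (IsLocalRing.mem_maximalIdeal _ |>.mpr h2)
    -- b is nilpotent
    have hbn : b ^ (N + 1) = 0 := by
      have : b ^ (N + 1) ∈ maximalIdeal A ^ (N + 1) := Ideal.pow_mem_pow hb _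
      have h2 : maximalIdeal A ^ (N + 1) = ⊥ := by
        rw [pow_succ, hN, Ideal.bot_mul]
      rw [h2] at this; simpa using this
    have key : ∀ n : ℕ, b ^ (n + 1) = 0 → b = 0 := by
      intro n
      induction n with
      | zero => intro h; simpa using h
      | succ n ih =>
        intro h
        have h3 : ξ (b ^ (n + 2)) = 0 := by rw [h, map_zero]
        rw [Derivation.leibniz_pow] at h3
        have h4 : b ^ (n + 1) * (((n + 2 : ℕ) : A) * ξ b) = 0 := by
          rw [show (n + 2 - 1) = n + 1 from rfl] at h3
          rw [← h3, nsmul_eq_mul, smul_eq_mul]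
          ring
        have hu2 : IsUnit (((n + 2 : ℕ) : A) * ξ b) := by
          refine IsUnit.mul ?_ hu
          have : IsUnit ((n + 2 : ℕ) : ℂ) := by
            rw [isUnit_iff_ne_zero]
            exact Nat.cast_ne_zero.mpr (Nat.succ_ne_zero _)
          have := this.map (algebraMap ℂ A)
          rwa [map_natCast] at this
        exact ih ((hu2.mul_left_eq_zero).mp h4)
    have hb0 : b = 0 := key N hbn
    rw [hb0, map_zero] at hu
    exact hu.ne_zero rfl
  -- step 2 : any a decomposes as algebraMap c + m
  have hint : IsIntegral ℂ a := Algebra.IsIntegral.isIntegral a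
  have hmon : (minpoly ℂ a).Monic := minpoly.monic hint
  have hsplit : (minpoly ℂ a).Splits := IsAlgClosed.splits _
  have hprod : (Multiset.map (fun c => a - algebraMap ℂ A c) (minpoly ℂ a).roots).prod
      ∈ maximalIdeal A := by
    have h0 := minpoly.aeval ℂ a
    conv at h0 => rw [hsplit.eq_prod_roots_of_monic hmon]
    rw [map_multiset_prod, Multiset.map_map] at h0
    have : (Multiset.map (fun c => a - algebraMap ℂ A c) (minpoly ℂ a).roots).prod = 0 := by
      rw [← h0]
      congr 1
      apply Multiset.map_congr rfl
      intro c _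
      simp [aeval_def]
    rw [this]; exact (maximalIdeal A).zero_mem
  obtain ⟨y, hy, hym⟩ := ((IsLocalRing.maximalIdeal.isMaximal A).isPrime.multiset_prod_mem_iff_exists_mem _).mp hprod
  obtain ⟨c, _, rfl⟩ := Multiset.mem_map.mp hy
  have := step1 _ hym
  rwa [map_sub, Derivation.map_algebraMap, sub_zero] at this





section
variable (A : Type) [CommRing A] [Algebra ℂ A] [FiniteDimensional ℂ A] [IsLocalRing A]
  {N : ℕ} (hN : maximalIdeal A ^ N = ⊥) (ξ : Derivation ℂ A A)

include hN in
lemma aux_pow_mem : ∀ j : ℕ, ∀ x ∈ maximalIdeal A ^ j, ξ x ∈ maximalIdeal A ^ j := by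
  intro j
  induction j with
  | zero => intro x _; simp
  | succ j ih =>
    intro x hx
    rw [pow_succ] at hx ⊢
    refine Submodule.mul_induction_on hx ?_ ?_
    · intro a ha b hb
      rw [Derivation.leibniz, smul_eq_mul, smul_eq_mul]
      refine Ideal.add_mem _ ?_ ?_
      · exact Ideal.mul_mem_mul ha (aux_deriv_mem A hN ξ b)
      · rw [mul_comm b (ξ a)]
        exact Ideal.mul_mem_mul (ih a ha) hb
    · intro x y hx hy
      rw [map_add]; exact Ideal.add_mem _ hx hy

include hN in
lemma aux_iter_pow_mem : ∀ n : ℕ, ∀ j : ℕ, ∀ x ∈ maximalIdeal A ^ j,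
    ((ξ : Module.End ℂ A) ^ n) x ∈ maximalIdeal A ^ j := by
  intro n
  induction n with
  | zero => intro j x hx; simpa using hx
  | succ n ih =>
    intro j x hx
    rw [pow_succ', Module.End.mul_apply]
    exact aux_pow_mem A hN ξ j _ (ih j x hx)

-- iterated Leibniz, span form
lemma aux_iter_leibniz (K : ℕ) (a b : A) :
    ((ξ : Module.End ℂ A) ^ K) (a * b) ∈
      Submodule.span ℂ {y : A | ∃ p q : ℕ, p + q = K ∧
        y = ((ξ : Module.End ℂ A) ^ p) a * ((ξ : Module.End ℂ A) ^ q) b} := by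
  induction K with
  | zero =>
    apply Submodule.subset_span
    exact ⟨0, 0, rfl, by simp⟩
  | succ K ih =>
    rw [pow_succ', Module.End.mul_apply]
    refine Submodule.span_induction (p := fun y _ =>
      (ξ : Module.End ℂ A) y ∈ Submodule.span ℂ {y : A | ∃ p q : ℕ, p + q = K + 1 ∧
        y = ((ξ : Module.End ℂ A) ^ p) a * ((ξ : Module.End ℂ A) ^ q) b}) ?_ ?_ ?_ ?_ ih
    · rintro y ⟨p, q, hpq, rfl⟩
      have hl : (ξ : Module.End ℂ A) (((ξ : Module.End ℂ A) ^ p) a * ((ξ : Module.End ℂ A) ^ q) b)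
          = ((ξ : Module.End ℂ A) ^ p) a * ((ξ : Module.End ℂ A) ^ (q + 1)) b
            + ((ξ : Module.End ℂ A) ^ (p + 1)) a * ((ξ : Module.End ℂ A) ^ q) b := by
        show ξ (((ξ : Module.End ℂ A) ^ p) a * ((ξ : Module.End ℂ A) ^ q) b) = _
        rw [Derivation.leibniz, smul_eq_mul, smul_eq_mul,
          pow_succ' (ξ : Module.End ℂ A) q, pow_succ' (ξ : Module.End ℂ A) p,
          Module.End.mul_apply, Module.End.mul_apply]
        ring_nf
        rfl
      rw [hl]
      refine Submodule.add_mem _ (Submodule.subset_span ⟨p, q + 1, by omega, rfl⟩)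
        (Submodule.subset_span ⟨p + 1, q, by omega, rfl⟩)
    · simp
    · intro x y _ _ hx hy
      rw [map_add]; exact Submodule.add_mem _ hx hy
    · intro c x _ hx
      rw [map_smul]; exact Submodule.smul_mem _ _ hx
end









section
variable (A : Type) [CommRing A] [Algebra ℂ A] [FiniteDimensional ℂ A] [IsLocalRing A]
  {N : ℕ} (hN : maximalIdeal A ^ N = ⊥) (ξ : Derivation ℂ A A)
  {n : ℕ} (hn : ∀ x ∈ maximalIdeal A, ((ξ : Module.End ℂ A) ^ n) x ∈ maximalIdeal A ^ 2)

include hN hn in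
lemma aux_climb : ∀ j : ℕ, ∃ K, ∀ x ∈ maximalIdeal A ^ (j + 1),
    ((ξ : Module.End ℂ A) ^ K) x ∈ maximalIdeal A ^ (j + 2) := by
  intro j
  induction j with
  | zero => exact ⟨n, fun x hx => hn x (by simpa using hx)⟩
  | succ j ih =>
    obtain ⟨K, hK⟩ := ih
    refine ⟨K + n, ?_⟩
    intro x hx
    rw [show j + 1 + 1 = (j + 1) + 1 from rfl, pow_succ] at hx
    refine Submodule.mul_induction_on hx ?_ ?_
    · intro a ha b hb
      have hmem := aux_iter_leibniz A ξ (K + n) a b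
      have hsub : {y : A | ∃ p q : ℕ, p + q = K + n ∧
          y = ((ξ : Module.End ℂ A) ^ p) a * ((ξ : Module.End ℂ A) ^ q) b} ⊆
          ((maximalIdeal A ^ (j + 1 + 2)).restrictScalars ℂ : Set A) := by
        rintro y ⟨p, q, hpq, rfl⟩
        simp only [SetLike.mem_coe, Submodule.restrictScalars_mem]
        by_cases hq : n ≤ q
        · -- ξ^q b ∈ m², ξ^p a ∈ m^{j+1}
          have h1 : ((ξ : Module.End ℂ A) ^ q) b ∈ maximalIdeal A ^ 2 := by
            rw [← pow_sub_mul_pow (ξ : Module.End ℂ A) hq, Module.End.mul_apply]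
            exact aux_iter_pow_mem A hN ξ _ 2 _ (hn b (by simpa using hb))
          have h2 : ((ξ : Module.End ℂ A) ^ p) a ∈ maximalIdeal A ^ (j + 1) :=
            aux_iter_pow_mem A hN ξ _ _ _ ha
          have := Ideal.mul_mem_mul h2 h1
          rwa [← pow_add] at this
        · -- p ≥ K + 1
          push_neg at hq
          have hp : K ≤ p := by omega
          have h1 : ((ξ : Module.End ℂ A) ^ p) a ∈ maximalIdeal A ^ (j + 2) := by
            rw [← pow_sub_mul_pow (ξ : Module.End ℂ A) hp, Module.End.mul_apply]
            exact aux_iter_pow_mem A hN ξ _ _ _ (hK a ha)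
          have h2 : ((ξ : Module.End ℂ A) ^ q) b ∈ maximalIdeal A ^ 1 := by
            rw [pow_one]
            have := aux_iter_pow_mem A hN ξ q 1 b (by simpa using hb)
            simpa using this
          have := Ideal.mul_mem_mul h1 h2
          rwa [← pow_add] at this
      have := (Submodule.span_le.mpr hsub) hmem
      simpa using this
    · intro x y hx hy
      rw [map_add]; exact Ideal.add_mem _ hx hy

include hN hn in
lemma aux_total : ∀ j : ℕ, ∃ M, ∀ x : A, ((ξ : Module.End ℂ A) ^ M) x ∈ maximalIdeal A ^ (j + 1) := by
  intro j
  induction j with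
  | zero => exact ⟨1, fun x => by simpa using aux_deriv_mem A hN ξ x⟩
  | succ j ih =>
    obtain ⟨M, hM⟩ := ih
    obtain ⟨K, hK⟩ := aux_climb A hN ξ hn j
    refine ⟨K + M, fun x => ?_⟩
    rw [pow_add (ξ : Module.End ℂ A) K M, Module.End.mul_apply]
    exact hK _ (hM x)

end







theorem aux_spectral
    (A : Type) [CommRing A] [Algebra ℂ A] [FiniteDimensional ℂ A] [IsLocalRing A]
    (r : ℕ) (hr1 : 1 ≤ r)
    (hr' : IsLocalRing.maximalIdeal A ^ (r + 1) = ⊥)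
    (s : A) (hs : s ≠ 0)
    (P : A → ℂ) (hP : ∀ m ∈ IsLocalRing.maximalIdeal A, m ^ r = P m • s)
    (hfni : ∀ ξ : Derivation ℂ A A, ξ ≠ 0 → ∀ lam : ℂ,
      (∃ v, v ∈ IsLocalRing.maximalIdeal A ∧ v ∉ IsLocalRing.maximalIdeal A ^ 2 ∧
        ξ v - lam • v ∈ IsLocalRing.maximalIdeal A ^ 2) →
      ∃ v, v ∈ IsLocalRing.maximalIdeal A ∧ v ∉ IsLocalRing.maximalIdeal A ^ 2 ∧
        ξ v - lam • v ∈ IsLocalRing.maximalIdeal A ^ 2 ∧ P v ≠ 0)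
    (ξ : Derivation ℂ A A) (hks : ξ s = 0) :
    ∃ n : ℕ, ∀ x ∈ maximalIdeal A, ((ξ : Module.End ℂ A) ^ n) x ∈ maximalIdeal A ^ 2 := by
  rcases eq_or_ne ξ 0 with rfl | hξ0
  · exact ⟨1, fun x hx => by simp⟩
  set J : Submodule ℂ A := (maximalIdeal A ^ 2).restrictScalars ℂ with hJ
  set Mm : Submodule ℂ A := (maximalIdeal A).restrictScalars ℂ with hMm
  have hJle : J ≤ Submodule.comap (ξ : Module.End ℂ A) J := by
    intro x hx
    exact aux_pow_mem A hr' ξ 2 x hx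
  set g : (A ⧸ J) →ₗ[ℂ] (A ⧸ J) := Submodule.mapQ J J (ξ : Module.End ℂ A) hJle with hg
  have hgmk : ∀ v : A, g (J.mkQ v) = J.mkQ (ξ v) := by
    intro v
    simp only [hg, Submodule.mkQ_apply, Submodule.mapQ_apply]
    rfl
  set U : Submodule ℂ (A ⧸ J) := Mm.map J.mkQ with hU
  have hUg : ∀ u ∈ U, g u ∈ U := by
    rintro u hu
    obtain ⟨v, hv, rfl⟩ := hu
    exact ⟨ξ v, by
      have := aux_pow_mem A hr' ξ 1 v (by rw [pow_one]; exact hv)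
      rw [pow_one] at this; exact this, (hgmk v).symm⟩
  set f : Module.End ℂ U := LinearMap.restrict g hUg with hf
  have heig : ∀ μ : ℂ, f.HasEigenvalue μ → μ = 0 := by
    intro μ hμ
    obtain ⟨u, hu⟩ := hμ.exists_hasEigenvector
    obtain ⟨v, hv, hvu⟩ := u.2
    have hvnot : v ∉ maximalIdeal A ^ 2 := by
      intro hmem
      apply hu.2
      have : (u : A ⧸ J) = 0 := by
        rw [← hvu, Submodule.mkQ_apply, Submodule.Quotient.mk_eq_zero]
        exact hmem
      exact Subtype.ext this
    have hvect : ξ v - μ • v ∈ maximalIdeal A ^ 2 := by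
      have h1 : (f u : A ⧸ J) = g (u : A ⧸ J) := rfl
      have h2 : (f u : A ⧸ J) = μ • (u : A ⧸ J) := by rw [hu.apply_eq_smul]; rfl
      have h3 : g (J.mkQ v) = μ • J.mkQ v := by rw [hvu, ← h1, h2]
      have h4 : J.mkQ (ξ v - μ • v) = 0 := by
        rw [map_sub, map_smul, ← hgmk v, h3, sub_self]
      rwa [Submodule.mkQ_apply, Submodule.Quotient.mk_eq_zero] at h4
    obtain ⟨w, hw1, hw2, hw3, hw4⟩ := hfni ξ hξ0 μ ⟨v, hv, hvnot, hvect⟩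
    -- now the computation
    have hwr : w ^ r = P w • s := hP w hw1
    set z := ξ w - μ • w with hz
    have hz2 : z ∈ maximalIdeal A ^ 2 := hw3
    have hkill : w ^ (r - 1) * z = 0 := by
      have h1 : w ^ (r - 1) ∈ maximalIdeal A ^ (r - 1) := Ideal.pow_mem_pow hw1 _
      have := Ideal.mul_mem_mul h1 hz2
      rw [← pow_add, show r - 1 + 2 = r + 1 by omega, hr'] at this
      simpa using this
    have hlhs : ξ (w ^ r) = 0 := by rw [hwr, Derivation.map_smul, hks, smul_zero]
    have hrhs : ξ (w ^ r) = (r : ℕ) • (μ • w ^ r) := by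
      rw [Derivation.leibniz_pow]
      congr 1
      have hξw : ξ w = μ • w + z := by rw [hz]; ring
      rw [hξw, smul_eq_mul, mul_add, hkill, add_zero, mul_smul_comm, ← pow_succ,
        show r - 1 + 1 = r by omega]
    have hzz : (r : ℕ) • (μ • (P w • s)) = 0 := by
      rw [← hwr, ← hrhs, hlhs]
    have : ((r : ℂ) * μ * P w) • s = 0 := by
      have h4 : ((r : ℂ) * μ * P w) • s = (r : ℕ) • (μ • (P w • s)) := by
        rw [← Nat.cast_smul_eq_nsmul ℂ, smul_smul, smul_smul]
      rw [h4]; exact hzz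
    rcases smul_eq_zero.mp this with h | h
    · have hrne : (r : ℂ) ≠ 0 := Nat.cast_ne_zero.mpr (by omega)
      rcases mul_eq_zero.mp h with h' | h'
      · rcases mul_eq_zero.mp h' with h'' | h''
        · exact absurd h'' hrne
        · exact h''
      · exact absurd h' hw4
    · exact absurd h hs
  have hnil : IsNilpotent f := aux_nilpotent_of_eigenvalues_zero f heig
  obtain ⟨n, hn⟩ := hnil
  refine ⟨n, fun x hx => ?_⟩
  have hxu : J.mkQ x ∈ U := ⟨x, hx, rfl⟩
  -- (f ^ k ⟨mkQ x, _⟩).val = mkQ (ξ^k x)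
  have key : ∀ k : ℕ, ((f ^ k) ⟨J.mkQ x, hxu⟩ : A ⧸ J) = J.mkQ (((ξ : Module.End ℂ A) ^ k) x) := by
    intro k
    induction k with
    | zero => simp
    | succ k ih =>
      rw [pow_succ' f k, Module.End.mul_apply, pow_succ' (ξ : Module.End ℂ A) k,
        Module.End.mul_apply]
      have h5 : ((f ((f ^ k) ⟨J.mkQ x, hxu⟩)) : A ⧸ J) = g (((f ^ k) ⟨J.mkQ x, hxu⟩ : A ⧸ J)) := rfl
      rw [h5, ih, hgmk]
      rfl
  have := key n
  rw [hn] at this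
  simp only [LinearMap.zero_apply, ZeroMemClass.coe_zero] at this
  have : J.mkQ (((ξ : Module.End ℂ A) ^ n) x) = 0 := this.symm
  rwa [Submodule.mkQ_apply, Submodule.Quotient.mk_eq_zero] at this







section
variable (A : Type) [CommRing A] [Algebra ℂ A] [FiniteDimensional ℂ A] [IsLocalRing A]
attribute [local instance 100] LieRing.ofAssociativeRing

lemma aux_ad_nilpotent (ξ : Derivation ℂ A A) (h : IsNilpotent (ξ : Module.End ℂ A)) :
    IsNilpotent (LieAlgebra.ad ℂ (Derivation ℂ A A) ξ) := by
  obtain ⟨m, hm⟩ := LieAlgebra.ad_nilpotent_of_nilpotent (R := ℂ) h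
  have key : ∀ j : ℕ, ∀ η : Derivation ℂ A A,
      ((((LieAlgebra.ad ℂ (Derivation ℂ A A) ξ) ^ j) η : Derivation ℂ A A) : Module.End ℂ A)
        = ((LieAlgebra.ad ℂ (Module.End ℂ A) (ξ : Module.End ℂ A)) ^ j)
            (η : Module.End ℂ A) := by
    intro j
    induction j with
    | zero => intro η; simp
    | succ j ih =>
      intro η
      rw [pow_succ (LieAlgebra.ad ℂ (Derivation ℂ A A) ξ) j, Module.End.mul_apply,
        pow_succ (LieAlgebra.ad ℂ (Module.End ℂ A) (ξ : Module.End ℂ A)) j,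
        Module.End.mul_apply, LieAlgebra.ad_apply, LieAlgebra.ad_apply,
        ih ⁅ξ, η⁆, Derivation.commutator_coe_linear_map]
  refine ⟨m, LinearMap.ext fun η => ?_⟩
  have hc := key m η
  rw [hm] at hc
  simp only [LinearMap.zero_apply] at hc ⊢
  ext a
  have := congrArg (fun (T : Module.End ℂ A) => T a) hc
  simpa using this

end

/-- Key lemma: if `A` is a finite-dimensional Gorenstein local ℂ-algebra of full
null-index, then every Lie subalgebra `k ⊆ Der(A)` acting trivially on the
socle is solvable. -/
theorem subalgebra_killing_socle_solvable
    (A : Type) [CommRing A] [Algebra ℂ A] [FiniteDimensional ℂ A] [IsLocalRing A]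
    (r : ℕ) (hr : IsLocalRing.maximalIdeal A ^ r ≠ ⊥)
    (hr' : IsLocalRing.maximalIdeal A ^ (r + 1) = ⊥)
    (s : A) (hs : s ≠ 0)
    (hsoc : ∀ a : A,
      (a ∈ IsLocalRing.maximalIdeal A ∧ ∀ x ∈ IsLocalRing.maximalIdeal A, a * x = 0) ↔
        a ∈ Submodule.span ℂ {s})
    (P : A → ℂ) (hP : ∀ m ∈ IsLocalRing.maximalIdeal A, m ^ r = P m • s)
    -- `A` is of full null-index:
    (hfni : ∀ ξ : Derivation ℂ A A, ξ ≠ 0 → ∀ lam : ℂ,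
      (∃ v, v ∈ IsLocalRing.maximalIdeal A ∧ v ∉ IsLocalRing.maximalIdeal A ^ 2 ∧
        ξ v - lam • v ∈ IsLocalRing.maximalIdeal A ^ 2) →
      ∃ v, v ∈ IsLocalRing.maximalIdeal A ∧ v ∉ IsLocalRing.maximalIdeal A ^ 2 ∧
        ξ v - lam • v ∈ IsLocalRing.maximalIdeal A ^ 2 ∧ P v ≠ 0)
    (k : LieSubalgebra ℂ (Derivation ℂ A A))
    (hk : ∀ ξ ∈ k, ξ s = 0) :
    LieAlgebra.IsSolvable k := by
  -- r ≥ 1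
  have hr1 : 1 ≤ r := by
    by_contra hcon
    interval_cases r
    · rw [pow_one] at hr'
      have hsm : s ∈ IsLocalRing.maximalIdeal A :=
        ((hsoc s).mpr (Submodule.mem_span_singleton_self s)).1
      rw [hr'] at hsm
      exact hs (by simpa using hsm)
  -- finite dimensionality of the derivation algebra
  have hinj : Function.Injective
      (fun D : Derivation ℂ A A => (D : Module.End ℂ A)) := fun D1 D2 h => by
    ext a
    exact congrArg (fun (T : Module.End ℂ A) => T a) h
  let ι : Derivation ℂ A A →ₗ[ℂ] Module.End ℂ A :=
    { toFun := fun D => (D : Module.End ℂ A)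
      map_add' := fun D1 D2 => Derivation.coe_add_linearMap D1 D2
      map_smul' := fun c D => Derivation.coe_smul_linearMap c D }
  haveI : FiniteDimensional ℂ (Derivation ℂ A A) :=
    FiniteDimensional.of_injective ι hinj
  haveI : FiniteDimensional ℂ k := by
    show FiniteDimensional ℂ k.toSubmodule
    infer_instance
  -- every element of k is ad-nilpotent
  have had : ∀ x : k, IsNilpotent (LieAlgebra.ad ℂ k x) := by
    intro x
    refine LieSubalgebra.isNilpotent_ad_of_isNilpotent_ad k ?_
    apply aux_ad_nilpotent
    obtain ⟨n, hn⟩ := aux_spectral A r hr1 hr' s hs P hP hfni x (hk x x.2)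
    obtain ⟨M, hM⟩ := aux_total A hr' (x : Derivation ℂ A A) hn r
    refine ⟨M, LinearMap.ext fun a => ?_⟩
    have := hM a
    rw [hr'] at this
    simpa using this
  haveI : LieRing.IsNilpotent k :=
    (LieAlgebra.isNilpotent_iff_forall (R := ℂ) (L := k)).mpr had
  infer_instance
end
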